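/- arXiv:2111.01643 — 2 statements merged into one kernel-verified Lean document; each statement's English description precedes it below -/
import Mathlib

section
/- For all ψ₁, φ₁ ∈ H₁ and ψ₂, φ₂ ∈ H₂ one has the identity B((ψ₁,ψ₂),(φ₁,φ₂)) = ⟨ψ₁ − p₁ψ₁, φ₁ − p₁φ₁⟩₁ + ⟨ψ₂ − p₂ψ₂, φ₂ − p₂φ₂⟩₂ + ⟨U(p₁ψ₁) + p₂ψ₂, U(p₁φ₁) + p₂φ₂⟩₂; equivalently, B((ψ₁,ψ₂),(φ₁,φ₂)) = ⟨Φ(ψ₁,ψ₂), Φ(φ₁,φ₂)⟩, where the right-hand side is the inner product of the product Hilbert space H₁ × H₂ × H₂. -/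
open scoped InnerProductSpace ComplexConjugate

noncomputable section

variable {H₁ H₂ : Type*}
  [NormedAddCommGroup H₁] [InnerProductSpace ℂ H₁]
  [NormedAddCommGroup H₂] [InnerProductSpace ℂ H₂]

/-- The pre-inner product `B` on `H₁ × H₂` of the minimally glued one-particle structure. -/
def gluedForm (O₁ : Submodule ℂ H₁) (O₂ : Submodule ℂ H₂)
    [O₁.HasOrthogonalProjection] [O₂.HasOrthogonalProjection]
    (U : O₁ ≃ₗᵢ[ℂ] O₂) (x y : H₁ × H₂) : ℂ :=
  ⟪x.1, y.1⟫_ℂ + ⟪x.2, y.2⟫_ℂ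
    + ⟪x.1, (U.symm (Submodule.orthogonalProjectionOnto O₂ y.2) : H₁)⟫_ℂ
    + ⟪x.2, (U (Submodule.orthogonalProjectionOnto O₁ y.1) : H₂)⟫_ℂ

/-- The map `Φ : H₁ × H₂ → H₁ × H₂ × H₂`,
`Φ(ψ₁,ψ₂) = (ψ₁ − p₁ψ₁, ψ₂ − p₂ψ₂, U(p₁ψ₁) + p₂ψ₂)`. -/
def gluedMap (O₁ : Submodule ℂ H₁) (O₂ : Submodule ℂ H₂)
    [O₁.HasOrthogonalProjection] [O₂.HasOrthogonalProjection]
    (U : O₁ ≃ₗᵢ[ℂ] O₂) (x : H₁ × H₂) : H₁ × H₂ × H₂ :=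
  (x.1 - (Submodule.orthogonalProjectionOnto O₁ x.1 : H₁),
   x.2 - (Submodule.orthogonalProjectionOnto O₂ x.2 : H₂),
   (U (Submodule.orthogonalProjectionOnto O₁ x.1) : H₂) + (Submodule.orthogonalProjectionOnto O₂ x.2 : H₂))

/-- The inner product of the product Hilbert space `H₁ × H₂ × H₂`. -/
def prodInner (x y : H₁ × H₂ × H₂) : ℂ :=
  ⟪x.1, y.1⟫_ℂ + ⟪x.2.1, y.2.1⟫_ℂ + ⟪x.2.2, y.2.2⟫_ℂ

theorem gluedForm_eq (O₁ : Submodule ℂ H₁) (O₂ : Submodule ℂ H₂)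
    [O₁.HasOrthogonalProjection] [O₂.HasOrthogonalProjection]
    (U : O₁ ≃ₗᵢ[ℂ] O₂) (ψ₁ φ₁ : H₁) (ψ₂ φ₂ : H₂) :
    gluedForm O₁ O₂ U (ψ₁, ψ₂) (φ₁, φ₂) =
      ⟪ψ₁ - (Submodule.orthogonalProjectionOnto O₁ ψ₁ : H₁),
        φ₁ - (Submodule.orthogonalProjectionOnto O₁ φ₁ : H₁)⟫_ℂ
      + ⟪ψ₂ - (Submodule.orthogonalProjectionOnto O₂ ψ₂ : H₂),
          φ₂ - (Submodule.orthogonalProjectionOnto O₂ φ₂ : H₂)⟫_ℂ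
      + ⟪(U (Submodule.orthogonalProjectionOnto O₁ ψ₁) : H₂) + (Submodule.orthogonalProjectionOnto O₂ ψ₂ : H₂),
          (U (Submodule.orthogonalProjectionOnto O₁ φ₁) : H₂) + (Submodule.orthogonalProjectionOnto O₂ φ₂ : H₂)⟫_ℂ
    ∧ gluedForm O₁ O₂ U (ψ₁, ψ₂) (φ₁, φ₂) =
        prodInner (gluedMap O₁ O₂ U (ψ₁, ψ₂)) (gluedMap O₁ O₂ U (φ₁, φ₂)) := by
  have key : gluedForm O₁ O₂ U (ψ₁, ψ₂) (φ₁, φ₂) =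
      ⟪ψ₁ - (Submodule.orthogonalProjectionOnto O₁ ψ₁ : H₁),
        φ₁ - (Submodule.orthogonalProjectionOnto O₁ φ₁ : H₁)⟫_ℂ
      + ⟪ψ₂ - (Submodule.orthogonalProjectionOnto O₂ ψ₂ : H₂),
          φ₂ - (Submodule.orthogonalProjectionOnto O₂ φ₂ : H₂)⟫_ℂ
      + ⟪(U (Submodule.orthogonalProjectionOnto O₁ ψ₁) : H₂) + (Submodule.orthogonalProjectionOnto O₂ ψ₂ : H₂),
          (U (Submodule.orthogonalProjectionOnto O₁ φ₁) : H₂) + (Submodule.orthogonalProjectionOnto O₂ φ₂ : H₂)⟫_ℂ := by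
    have hU : ∀ (a b : O₁), ⟪(U a : H₂), (U b : H₂)⟫_ℂ = ⟪(a : H₁), (b : H₁)⟫_ℂ := by
      intro a b
      rw [← Submodule.coe_inner, ← Submodule.coe_inner, U.inner_map_map]
    have h1 : ⟪ψ₁, ((Submodule.orthogonalProjectionOnto O₁ φ₁ : O₁) : H₁)⟫_ℂ
        = ⟪((Submodule.orthogonalProjectionOnto O₁ ψ₁ : O₁) : H₁),
            ((Submodule.orthogonalProjectionOnto O₁ φ₁ : O₁) : H₁)⟫_ℂ := by
      rw [← Submodule.coe_inner, Submodule.inner_orthogonalProjectionOnto_eq_of_mem_right]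
    have h1' : ⟪((Submodule.orthogonalProjectionOnto O₁ ψ₁ : O₁) : H₁), φ₁⟫_ℂ
        = ⟪((Submodule.orthogonalProjectionOnto O₁ ψ₁ : O₁) : H₁),
            ((Submodule.orthogonalProjectionOnto O₁ φ₁ : O₁) : H₁)⟫_ℂ := by
      rw [← Submodule.coe_inner, Submodule.inner_orthogonalProjectionOnto_eq_of_mem_left]
    have h2 : ⟪ψ₂, ((Submodule.orthogonalProjectionOnto O₂ φ₂ : O₂) : H₂)⟫_ℂ
        = ⟪((Submodule.orthogonalProjectionOnto O₂ ψ₂ : O₂) : H₂),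
            ((Submodule.orthogonalProjectionOnto O₂ φ₂ : O₂) : H₂)⟫_ℂ := by
      rw [← Submodule.coe_inner, Submodule.inner_orthogonalProjectionOnto_eq_of_mem_right]
    have h2' : ⟪((Submodule.orthogonalProjectionOnto O₂ ψ₂ : O₂) : H₂), φ₂⟫_ℂ
        = ⟪((Submodule.orthogonalProjectionOnto O₂ ψ₂ : O₂) : H₂),
            ((Submodule.orthogonalProjectionOnto O₂ φ₂ : O₂) : H₂)⟫_ℂ := by
      rw [← Submodule.coe_inner, Submodule.inner_orthogonalProjectionOnto_eq_of_mem_left]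
    have hc1 : ⟪ψ₁, ((U.symm (Submodule.orthogonalProjectionOnto O₂ φ₂) : O₁) : H₁)⟫_ℂ
        = ⟪(U (Submodule.orthogonalProjectionOnto O₁ ψ₁) : H₂),
            ((Submodule.orthogonalProjectionOnto O₂ φ₂ : O₂) : H₂)⟫_ℂ := by
      rw [← Submodule.inner_orthogonalProjectionOnto_eq_of_mem_right (K := O₁)
          (U.symm (Submodule.orthogonalProjectionOnto O₂ φ₂)) ψ₁,
        ← U.inner_map_map, U.apply_symm_apply, Submodule.coe_inner]
    have hc2 : ⟪ψ₂, ((U (Submodule.orthogonalProjectionOnto O₁ φ₁) : O₂) : H₂)⟫_ℂ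
        = ⟪((Submodule.orthogonalProjectionOnto O₂ ψ₂ : O₂) : H₂),
            (U (Submodule.orthogonalProjectionOnto O₁ φ₁) : H₂)⟫_ℂ := by
      rw [← Submodule.coe_inner, Submodule.inner_orthogonalProjectionOnto_eq_of_mem_right]
    simp only [gluedForm, inner_sub_left, inner_sub_right, inner_add_left, inner_add_right]
    rw [hU]
    linear_combination h1 + h1' + h2 + h2' + hc1 + hc2
  exact ⟨key, by simpa only [prodInner, gluedMap] using key⟩


end
end

section
/- Uniqueness of maximal covers: let X be a set, let c : Set X → Set X be a closure operator on subsets of X (monotone: A ⊆ B implies c(A) ⊆ c(B); extensive: A ⊆ c(A); idempotent: c(c(A)) = c(A)), and let P be a predicate on subsets of X. Call an indexed family {A_j}_{j∈J} of subsets of X, each satisfying P, a maximal P-cover family for c if (i) for every subset U of X with P(U) there exists j ∈ J with U ⊆ c(A_j), and (ii) for all j, j' ∈ J, A_j ⊆ c(A_{j'}) implies c(A_j) = c(A_{j'}). Then any two maximal P-cover families {A_j}_{j∈J} and {B_k}_{k∈K} for c have the same families of closures: { c(A_j) : j ∈ J } = { c(B_k) : k ∈ K } as sets of subsets of X. -/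
/-- Uniqueness of maximal covers: if `c` is a closure operator on subsets of `X` (monotone,
extensive, idempotent) and `{A j}` and `{B k}` are two maximal `P`-cover families for `c`
(each member satisfies `P`; every `P`-set is contained in the `c`-closure of some member;
and `A j ⊆ c (A j')` forces `c (A j) = c (A j')`), then the two families have the same
families of closures. -/
theorem maximal_cover_unique {X : Type*} (c : Set X → Set X)
    (hmono : ∀ A B : Set X, A ⊆ B → c A ⊆ c B)
    (hext : ∀ A : Set X, A ⊆ c A)
    (hidem : ∀ A : Set X, c (c A) = c A)
    (P : Set X → Prop)
    {J K : Type*} (A : J → Set X) (B : K → Set X)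
    (hPA : ∀ j : J, P (A j)) (hPB : ∀ k : K, P (B k))
    (hA₁ : ∀ U : Set X, P U → ∃ j : J, U ⊆ c (A j))
    (hA₂ : ∀ j j' : J, A j ⊆ c (A j') → c (A j) = c (A j'))
    (hB₁ : ∀ U : Set X, P U → ∃ k : K, U ⊆ c (B k))
    (hB₂ : ∀ k k' : K, B k ⊆ c (B k') → c (B k) = c (B k')) :
    Set.range (fun j : J => c (A j)) = Set.range (fun k : K => c (B k)) := by
  ext S
  simp only [Set.mem_range]
  constructor
  · rintro ⟨j, rfl⟩
    obtain ⟨k, hk⟩ := hB₁ (A j) (hPA j)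
    obtain ⟨j', hj'⟩ := hA₁ (B k) (hPB k)
    have h1 : A j ⊆ c (A j') := hk.trans ((hidem (A j')) ▸ hmono _ _ hj')
    have h2 : c (A j) = c (A j') := hA₂ j j' h1
    have h3 : B k ⊆ c (A j) := h2 ▸ hj'
    refine ⟨k, ?_⟩
    apply Set.Subset.antisymm
    · exact (hidem (A j)) ▸ hmono _ _ h3
    · exact (hidem (B k)) ▸ hmono _ _ hk
  · rintro ⟨k, rfl⟩
    obtain ⟨j, hj⟩ := hA₁ (B k) (hPB k)
    obtain ⟨k', hk'⟩ := hB₁ (A j) (hPA j)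
    have h1 : B k ⊆ c (B k') := hj.trans ((hidem (B k')) ▸ hmono _ _ hk')
    have h2 : c (B k) = c (B k') := hB₂ k k' h1
    have h3 : A j ⊆ c (B k) := h2 ▸ hk'
    refine ⟨j, ?_⟩
    apply Set.Subset.antisymm
    · exact (hidem (B k)) ▸ hmono _ _ h3
    · exact (hidem (A j)) ▸ hmono _ _ hj
end
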